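/- Let 0 < r_k < 1 with r_k → 1 and define curves γ_k : [0,1] → 𝔻² by γ_k(t) = (r_k(2t-1)/(1-2r_k² t), 2t·r_k) for t ∈ [0,1/2] and γ_k(t) = (r_k(2t-1)/(1+r_k²(2t-2)), (2-2t)·r_k) for t ∈ [1/2, 1]. Then for every compact subset K of the open bidisc 𝔻² there exists k₀ such that γ_k([0,1]) ∩ K = ∅ for all k ≥ k₀. -/

import Mathlib

/-- The explicit curves of Example 3.2: geodesic segments of the bidisc
joining `(-r_k, 0)` to `(r_k, 0)`. -/
noncomputable def bidiscCurve (r : ℝ) (t : ℝ) : ℂ × ℂ :=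
  if t ≤ 1 / 2 then
    (((r * (2 * t - 1) / (1 - 2 * r ^ 2 * t) : ℝ) : ℂ), ((2 * t * r : ℝ) : ℂ))
  else
    (((r * (2 * t - 1) / (1 + r ^ 2 * (2 * t - 2) : ℝ) : ℝ) : ℂ),
      (((2 - 2 * t) * r : ℝ) : ℂ))

private lemma bidisc_key (r c s : ℝ) (hr0 : 0 < r) (hr1 : r < 1) (hc0 : 0 ≤ c)
    (hc1 : c < 1) (hrc : 2 * c < r * (1 + c ^ 2)) (hs0 : 0 ≤ s) (hs1 : s ≤ 1)
    (hsc : r * s ≤ c) : c < r * (1 - s) / (1 - r ^ 2 * s) := by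
  have hd : 0 < 1 - r ^ 2 * s := by nlinarith
  rw [lt_div_iff₀ hd]
  nlinarith [mul_nonneg (sub_nonneg.2 hsc) (by nlinarith : (0:ℝ) ≤ 1 - c * r)]

theorem bidisc_curves_leave_compacts (r : ℕ → ℝ)
    (hr0 : ∀ k, 0 < r k) (hr1 : ∀ k, r k < 1)
    (hr : Filter.Tendsto r Filter.atTop (nhds 1))
    (K : Set (ℂ × ℂ)) (hK : IsCompact K)
    (hKsub : K ⊆ {z : ℂ × ℂ | ‖z.1‖ < 1 ∧ ‖z.2‖ < 1}) :
    ∃ k₀ : ℕ, ∀ k ≥ k₀, ∀ t ∈ Set.Icc (0:ℝ) 1, bidiscCurve (r k) t ∉ K := by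
  rcases K.eq_empty_or_nonempty with hKe | hKne
  · exact ⟨0, fun k _ t _ => by simp [hKe]⟩
  -- obtain a bound c < 1 for max of moduli on K
  obtain ⟨z₀, hz₀K, hz₀max⟩ := hK.exists_isMaxOn hKne
    (Continuous.continuousOn (by continuity :
      Continuous fun z : ℂ × ℂ => max ‖z.1‖ ‖z.2‖))
  set c : ℝ := max ‖z₀.1‖ ‖z₀.2‖ with hc
  have hc0 : 0 ≤ c := le_trans (norm_nonneg _) (le_max_left _ _)
  have hc1 : c < 1 := max_lt (hKsub hz₀K).1 (hKsub hz₀K).2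
  have hlt : 2 * c / (1 + c ^ 2) < 1 := by
    rw [div_lt_one (by positivity)]; nlinarith
  have hev : ∀ᶠ k in Filter.atTop, 2 * c / (1 + c ^ 2) < r k :=
    hr.eventually (eventually_gt_nhds hlt)
  obtain ⟨k₀, hk₀⟩ := Filter.eventually_atTop.1 hev
  refine ⟨k₀, fun k hk t ht hmem => ?_⟩
  have hrk0 := hr0 k; have hrk1 := hr1 k
  have hrc : 2 * c < r k * (1 + c ^ 2) := by
    have := hk₀ k hk
    rw [div_lt_iff₀ (by positivity)] at this
    linarith [this]
  have hb := hz₀max hmem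
  simp only [Set.mem_setOf_eq] at hb
  rw [← hc] at hb
  have hb1 : ‖(bidiscCurve (r k) t).1‖ ≤ c := le_trans (le_max_left _ _) hb
  have hb2 : ‖(bidiscCurve (r k) t).2‖ ≤ c := le_trans (le_max_right _ _) hb
  obtain ⟨ht0, ht1⟩ := ht
  by_cases hhalf : t ≤ 1 / 2
  · rw [bidiscCurve, if_pos hhalf] at hb1 hb2
    simp only [Complex.norm_real, Real.norm_eq_abs] at hb1 hb2
    have hs0 : (0:ℝ) ≤ 2 * t := by linarith
    have hs1 : 2 * t ≤ 1 := by linarith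
    have hsc : r k * (2 * t) ≤ c := by
      rw [abs_of_nonneg (by positivity)] at hb2; linarith [hb2]
    have key := bidisc_key (r k) c (2 * t) hrk0 hrk1 hc0 hc1 hrc hs0 hs1 hsc
    have heq : r k * (2 * t - 1) / (1 - 2 * (r k) ^ 2 * t)
        = -(r k * (1 - 2 * t) / (1 - (r k) ^ 2 * (2 * t))) := by ring
    rw [heq, abs_neg] at hb1
    have hd : 0 < 1 - (r k) ^ 2 * (2 * t) := by nlinarith
    rw [abs_of_nonneg (div_nonneg (mul_nonneg hrk0.le (by linarith)) hd.le)] at hb1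
    linarith
  · rw [bidiscCurve, if_neg hhalf] at hb1 hb2
    push_neg at hhalf
    simp only [Complex.norm_real, Real.norm_eq_abs] at hb1 hb2
    have hs0 : (0:ℝ) ≤ 2 - 2 * t := by linarith
    have hs1 : 2 - 2 * t ≤ 1 := by linarith
    have hsc : r k * (2 - 2 * t) ≤ c := by
      rw [abs_of_nonneg (by positivity)] at hb2; linarith [hb2]
    have key := bidisc_key (r k) c (2 - 2 * t) hrk0 hrk1 hc0 hc1 hrc hs0 hs1 hsc
    have heq : r k * (2 * t - 1) / (1 + (r k) ^ 2 * (2 * t - 2))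
        = r k * (1 - (2 - 2 * t)) / (1 - (r k) ^ 2 * (2 - 2 * t)) := by ring_nf
    rw [heq] at hb1
    have hd : 0 < 1 - (r k) ^ 2 * (2 - 2 * t) := by nlinarith
    rw [abs_of_nonneg (div_nonneg (mul_nonneg hrk0.le (by linarith)) hd.le)] at hb1
    linarith
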